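/- Under the stated assumptions, the function Ĝ has simple poles at p₁ and at −p₁ − πi with residues r₂ and r₁ respectively; precisely, (w − p₁)·Ĝ(w) tends to r₂ = sinh(p₁ − iΦ)/cosh p₁ as w → p₁ (w ≠ p₁), and (w − (−p₁ − πi))·Ĝ(w) tends to r₁ = −sinh(p₁ + iΦ)/cosh p₁ as w → −p₁ − πi (w ≠ −p₁ − πi). -/

import Mathlib

open Complex Filter Topology

lemma sinh_shift_pi (z : ℂ) : Complex.sinh (z + Real.pi * I) = -Complex.sinh z := by
  rw [Complex.sinh_add, Complex.sinh_mul_I, Complex.cosh_mul_I]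
  simp [← Complex.ofReal_sin, ← Complex.ofReal_cos, Real.sin_pi, Real.cos_pi]

lemma cosh_shift_pi (z : ℂ) : Complex.cosh (z + Real.pi * I) = -Complex.cosh z := by
  rw [Complex.cosh_add, Complex.sinh_mul_I, Complex.cosh_mul_I]
  simp [← Complex.ofReal_sin, ← Complex.ofReal_cos, Real.sin_pi, Real.cos_pi]

lemma residue_key (ω k c a : ℂ) (hω : ω ≠ 0)
    (hD : I * ω * Complex.sinh a + k = 0) (hc : Complex.cosh a ≠ 0) :
    Tendsto (fun w => (w - a) * ((I * ω * Complex.sinh (w - c)) / (I * ω * Complex.sinh w + k)))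
      (𝓝[≠] a) (𝓝 (Complex.sinh (a - c) / Complex.cosh a)) := by
  set D : ℂ → ℂ := fun w => I * ω * Complex.sinh w + k with hDdef
  have hDa : D a = 0 := hD
  have hderiv : HasDerivAt D (I * ω * Complex.cosh a) a := by
    exact ((Complex.hasDerivAt_sinh a).const_mul (I * ω)).add_const k
  have hslope : Tendsto (slope D a) (𝓝[≠] a) (𝓝 (I * ω * Complex.cosh a)) :=
    hasDerivAt_iff_tendsto_slope.mp hderiv
  have hne : I * ω * Complex.cosh a ≠ 0 := by
    simp [hω, hc, Complex.I_ne_zero]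
  have hinv : Tendsto (fun w => (slope D a w)⁻¹) (𝓝[≠] a) (𝓝 (I * ω * Complex.cosh a)⁻¹) :=
    hslope.inv₀ hne
  have hN : Tendsto (fun w => I * ω * Complex.sinh (w - c)) (𝓝[≠] a)
      (𝓝 (I * ω * Complex.sinh (a - c))) := by
    apply Tendsto.mono_left _ nhdsWithin_le_nhds
    exact (Continuous.tendsto (by continuity) a)
  have hmul := hN.mul hinv
  have heq : ∀ w : ℂ,
      (I * ω * Complex.sinh (w - c)) * (slope D a w)⁻¹
      = (w - a) * ((I * ω * Complex.sinh (w - c)) / (I * ω * Complex.sinh w + k)) := by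
    intro w
    have h1 : slope D a w = D w / (w - a) := by
      rw [slope_def_field, hDa, sub_zero]
    rw [h1, inv_div]
    show _ = (w - a) * (I * ω * Complex.sinh (w - c) / D w)
    ring
  have hval : I * ω * Complex.sinh (a - c) * (I * ω * Complex.cosh a)⁻¹
      = Complex.sinh (a - c) / Complex.cosh a := by
    field_simp
  rw [← hval]
  exact hmul.congr heq

theorem residues_of_G_at_p1_and_minus_p1_minus_pi_i
    (ω : ℂ) (hω : 0 < ω.im) (k : ℝ) (hk : 0 < k)
    (Φ : ℝ) (hΦ : Real.pi < Φ ∧ Φ < 2 * Real.pi)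
    (p₁ : ℂ) (hp : Complex.sinh p₁ = I * k / ω) (hc : Complex.cosh p₁ ≠ 0)
    (G : ℂ → ℂ)
    (hG : ∀ w : ℂ, G w = (I * ω * Complex.sinh (w - I * Φ)) / (I * ω * Complex.sinh w + k)) :
    Tendsto (fun w => (w - p₁) * G w) (𝓝[≠] p₁)
      (𝓝 (Complex.sinh (p₁ - I * Φ) / Complex.cosh p₁)) ∧
    Tendsto (fun w => (w - (-p₁ - Real.pi * I)) * G w) (𝓝[≠] (-p₁ - Real.pi * I))
      (𝓝 (-Complex.sinh (p₁ + I * Φ) / Complex.cosh p₁)) := by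
  have hω' : ω ≠ 0 := by
    intro h; rw [h] at hω; simp at hω
  have hD1 : I * ω * Complex.sinh p₁ + (k : ℂ) = 0 := by
    rw [hp]; field_simp; ring_nf; simp [Complex.I_sq]
  set q : ℂ := -p₁ - Real.pi * I with hq
  have hsq : Complex.sinh q = Complex.sinh p₁ := by
    have : q = -(p₁ + Real.pi * I) := by rw [hq]; ring
    rw [this, Complex.sinh_neg, sinh_shift_pi, neg_neg]
  have hcq : Complex.cosh q = -Complex.cosh p₁ := by
    have : q = -(p₁ + Real.pi * I) := by rw [hq]; ring
    rw [this, Complex.cosh_neg, cosh_shift_pi]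
  have hD2 : I * ω * Complex.sinh q + (k : ℂ) = 0 := by rw [hsq]; exact hD1
  have hcq' : Complex.cosh q ≠ 0 := by rw [hcq]; exact neg_ne_zero.mpr hc
  constructor
  · have := residue_key ω k (I * Φ) p₁ hω' hD1 hc
    exact this.congr (fun w => by rw [hG w])
  · have h2 := residue_key ω k (I * Φ) q hω' hD2 hcq'
    have hval : Complex.sinh (q - I * Φ) / Complex.cosh q
        = -Complex.sinh (p₁ + I * Φ) / Complex.cosh p₁ := by
      have h3 : q - I * Φ = -((p₁ + I * Φ) + Real.pi * I) := by rw [hq]; ring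
      rw [h3, Complex.sinh_neg, sinh_shift_pi, neg_neg, hcq, div_neg, neg_div]
    rw [← hval]
    exact h2.congr (fun w => by rw [hG w])
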